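/- Let {A_i}_{i=1}^m be events with P(A_i) > 0, extended periodically to {B_n} by B_n = A_{((n−1) mod m)+1}. Then for every strictly increasing τ: ℕ → ℕ with ∑_n P(B_{τ(n)}) = ∞, limsup_{N→∞} (∑_{k=1}^N P(B_{τ(k)}))² / (∑_{i,j=1}^N P(B_{τ(i)} ∩ B_{τ(j)})) ≤ sup_{ω ∈ ℝ^m} (∑_i ω_i P(A_i))² / (∑_{i,j} ω_i ω_j P(A_i ∩ A_j)). -/

import Mathlib

open MeasureTheory Filter Set

private lemma fiber_sum {m : ℕ} (s : Finset ℕ) (idx : ℕ → Fin m) (g : Fin m → ℝ) :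
    ∑ k ∈ s, g (idx k) = ∑ i, ((s.filter (fun k => idx k = i)).card : ℝ) * g i := by
  rw [← Finset.sum_fiberwise s idx (fun k => g (idx k))]
  refine Finset.sum_congr rfl fun i _ => ?_
  have h1 : ∀ k ∈ s.filter (fun k => idx k = i), g (idx k) = g i := fun k hk => by
    rw [(Finset.mem_filter.mp hk).2]
  rw [Finset.sum_congr rfl h1, Finset.sum_const, nsmul_eq_mul]

private lemma fiber_sum2 {m : ℕ} (s : Finset ℕ) (idx : ℕ → Fin m) (h : Fin m → Fin m → ℝ) :
    ∑ k ∈ s, ∑ l ∈ s, h (idx k) (idx l)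
      = ∑ i, ∑ j, ((s.filter (fun k => idx k = i)).card : ℝ) *
          ((s.filter (fun k => idx k = j)).card : ℝ) * h i j := by
  set w : Fin m → ℝ := fun i => ((s.filter (fun k => idx k = i)).card : ℝ) with hw
  calc ∑ k ∈ s, ∑ l ∈ s, h (idx k) (idx l)
      = ∑ k ∈ s, ∑ j, w j * h (idx k) j :=
        Finset.sum_congr rfl fun k _ => fiber_sum s idx (h (idx k))
    _ = ∑ j, ∑ k ∈ s, w j * h (idx k) j := Finset.sum_comm
    _ = ∑ j, w j * ∑ i, w i * h i j := by
        refine Finset.sum_congr rfl fun j _ => ?_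
        rw [← Finset.mul_sum, fiber_sum s idx (fun i => h i j)]
    _ = ∑ i, ∑ j, w i * w j * h i j := by
        rw [Finset.sum_comm]
        refine Finset.sum_congr rfl fun i _ => ?_
        rw [Finset.mul_sum]
        exact Finset.sum_congr rfl fun j _ => by ring

private lemma cauchy_schwarz_events {Ω : Type*} [MeasurableSpace Ω] (μ : Measure Ω)
    [IsProbabilityMeasure μ] {m : ℕ} (A : Fin m → Set Ω)
    (hA : ∀ i, MeasurableSet (A i)) (ω : Fin m → ℝ) :
    (∑ i, ω i * (μ (A i)).toReal) ^ 2 ≤ ∑ i, ∑ j, ω i * ω j * (μ (A i ∩ A j)).toReal := by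
  set f : Ω → ℝ := fun x => ∑ i, ω i * (A i).indicator 1 x with hf
  have hind : ∀ (s : Set Ω), MeasurableSet s →
      Integrable (fun x => s.indicator (1 : Ω → ℝ) x) μ := by
    intro s hs
    rw [integrable_indicator_iff hs]
    exact (integrableOn_const_iff).mpr (Or.inr (measure_lt_top μ s))
  have hfi : Integrable f μ :=
    integrable_finset_sum _ fun i _ => ((hind (A i) (hA i)).const_mul _)
  have h1 : ∫ x, f x ∂μ = ∑ i, ω i * (μ (A i)).toReal := by
    rw [hf, integral_finset_sum _ fun i _ => ((hind (A i) (hA i)).const_mul _)]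
    refine Finset.sum_congr rfl fun i _ => ?_
    rw [integral_const_mul, integral_indicator_one (hA i), measureReal_def]
  have hsq : ∀ x, f x ^ 2 = ∑ i, ∑ j, ω i * ω j * (A i ∩ A j).indicator 1 x := by
    intro x
    rw [sq, hf, Finset.sum_mul_sum]
    refine Finset.sum_congr rfl fun i _ => Finset.sum_congr rfl fun j _ => ?_
    by_cases hi : x ∈ A i <;> by_cases hj : x ∈ A j <;>
      simp [Set.indicator_apply, hi, hj, Set.mem_inter_iff] <;> ring
  have hint2 : Integrable (fun x => ∑ i, ∑ j, ω i * ω j * (A i ∩ A j).indicator 1 x) μ :=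
    integrable_finset_sum _ fun i _ => integrable_finset_sum _ fun j _ =>
      ((hind _ ((hA i).inter (hA j))).const_mul _)
  have hf2 : Integrable (fun x => f x ^ 2) μ := by
    rw [show (fun x => f x ^ 2) = fun x => ∑ i, ∑ j, ω i * ω j * (A i ∩ A j).indicator 1 x
      from funext hsq]
    exact hint2
  have h2 : ∫ x, f x ^ 2 ∂μ = ∑ i, ∑ j, ω i * ω j * (μ (A i ∩ A j)).toReal := by
    rw [show (fun x => f x ^ 2) = fun x => ∑ i, ∑ j, ω i * ω j * (A i ∩ A j).indicator 1 x
      from funext hsq]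
    rw [integral_finset_sum _ fun i _ => integrable_finset_sum _ fun j _ =>
      ((hind _ ((hA i).inter (hA j))).const_mul _)]
    refine Finset.sum_congr rfl fun i _ => ?_
    rw [integral_finset_sum _ fun j _ => ((hind _ ((hA i).inter (hA j))).const_mul _)]
    refine Finset.sum_congr rfl fun j _ => ?_
    rw [integral_const_mul, integral_indicator_one ((hA i).inter (hA j)), measureReal_def]
  -- Cauchy-Schwarz: (∫ f)^2 ≤ ∫ f^2
  set c : ℝ := ∫ x, f x ∂μ with hc
  have key : c ^ 2 ≤ ∫ x, f x ^ 2 ∂μ := by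
    have h0 : 0 ≤ ∫ x, (f x - c) ^ 2 ∂μ := integral_nonneg fun x => sq_nonneg _
    have hrw : ∀ x, (f x - c) ^ 2 = f x ^ 2 + ((-2 * c) * f x + c ^ 2) := fun x => by ring
    have hg1 : Integrable (fun x => (-2 * c) * f x) μ := hfi.const_mul _
    have hg2 : Integrable (fun _ : Ω => c ^ 2) μ := integrable_const _
    have hg : Integrable (fun x => (-2 * c) * f x + c ^ 2) μ := hg1.add hg2
    rw [show (fun x => (f x - c) ^ 2)
        = fun x => f x ^ 2 + ((-2 * c) * f x + c ^ 2) from funext hrw] at h0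
    rw [integral_add hf2 hg, integral_add hg1 hg2, integral_const_mul,
      integral_const, measureReal_def, measure_univ] at h0
    simp only [ENNReal.toReal_one, one_smul, ← hc] at h0
    nlinarith [h0]
  rw [← h1, ← h2]
  exact key

theorem periodic_ER_subsequence_le_GK {Ω : Type*} [MeasurableSpace Ω] (μ : Measure Ω)
    [IsProbabilityMeasure μ] (m : ℕ) (hm : 0 < m) (A : Fin m → Set Ω)
    (hA : ∀ i, MeasurableSet (A i)) (hpos : ∀ i, 0 < μ (A i))
    (B : ℕ → Set Ω) (hB : ∀ n, B n = A ⟨(n - 1) % m, Nat.mod_lt _ hm⟩)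
    (τ : ℕ → ℕ) (hτ : StrictMono τ) (hτ1 : ∀ n, 1 ≤ τ n)
    (hdiv : Tendsto (fun N => ∑ k ∈ Finset.Icc 1 N, (μ (B (τ k))).toReal) atTop atTop) :
    Filter.limsup (fun N =>
        (∑ k ∈ Finset.Icc 1 N, (μ (B (τ k))).toReal) ^ 2 /
          (∑ i ∈ Finset.Icc 1 N, ∑ j ∈ Finset.Icc 1 N,
            (μ (B (τ i) ∩ B (τ j))).toReal)) atTop ≤
      sSup {x : ℝ | ∃ ω : Fin m → ℝ,
        x = (∑ i, ω i * (μ (A i)).toReal) ^ 2 /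
          (∑ i, ∑ j, ω i * ω j * (μ (A i ∩ A j)).toReal)} := by
  have hbdd : BddAbove {x : ℝ | ∃ ω : Fin m → ℝ,
        x = (∑ i, ω i * (μ (A i)).toReal) ^ 2 /
          (∑ i, ∑ j, ω i * ω j * (μ (A i ∩ A j)).toReal)} := by
    refine ⟨1, ?_⟩
    rintro x ⟨ω, rfl⟩
    have hcs := cauchy_schwarz_events μ A hA ω
    exact div_le_one_of_le₀ hcs (le_trans (sq_nonneg _) hcs)
  set idx : ℕ → Fin m := fun k => (⟨(τ k - 1) % m, Nat.mod_lt _ hm⟩ : Fin m) with hidx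
  refine limsup_le_of_le (isCoboundedUnder_le_of_le atTop fun N =>
    div_nonneg (sq_nonneg _)
      (Finset.sum_nonneg fun i _ => Finset.sum_nonneg fun j _ => ENNReal.toReal_nonneg))
    (Eventually.of_forall fun N => ?_)
  refine le_csSup hbdd ?_
  refine ⟨fun i => (((Finset.Icc 1 N).filter (fun k => idx k = i)).card : ℝ), ?_⟩
  have hnum : ∑ k ∈ Finset.Icc 1 N, (μ (B (τ k))).toReal
      = ∑ i, (((Finset.Icc 1 N).filter (fun k => idx k = i)).card : ℝ)
          * (μ (A i)).toReal := by
    have h1 : ∀ k ∈ Finset.Icc 1 N,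
        (μ (B (τ k))).toReal = (fun i => (μ (A i)).toReal) (idx k) := fun k _ => by
      rw [hB (τ k)]
    rw [Finset.sum_congr rfl h1]
    exact fiber_sum (Finset.Icc 1 N) idx (fun i => (μ (A i)).toReal)
  have hden : ∑ i ∈ Finset.Icc 1 N, ∑ j ∈ Finset.Icc 1 N,
        (μ (B (τ i) ∩ B (τ j))).toReal
      = ∑ i, ∑ j, (((Finset.Icc 1 N).filter (fun k => idx k = i)).card : ℝ)
          * (((Finset.Icc 1 N).filter (fun k => idx k = j)).card : ℝ)
          * (μ (A i ∩ A j)).toReal := by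
    have h1 : ∀ k ∈ Finset.Icc 1 N, ∑ l ∈ Finset.Icc 1 N, (μ (B (τ k) ∩ B (τ l))).toReal
        = ∑ l ∈ Finset.Icc 1 N,
            (fun i j => (μ (A i ∩ A j)).toReal) (idx k) (idx l) := fun k _ => by
      refine Finset.sum_congr rfl fun l _ => ?_
      rw [hB (τ k), hB (τ l)]
    rw [Finset.sum_congr rfl h1]
    exact fiber_sum2 (Finset.Icc 1 N) idx (fun i j => (μ (A i ∩ A j)).toReal)
  rw [hnum, hden]
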